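/- Let S = (P, L) be a slim dense near hexagon and let (R, ψ) be a non-abelian representation of S. Let x ∈ P and let Y be a finite subset of Γ₃(x) = {y ∈ P : d(x,y) = 3}. Then for any enumeration y₁, …, y_k of the elements of Y, the commutator [r_x, r_{y₁} r_{y₂} ⋯ r_{y_k}] equals 1 if and only if k = |Y| is even. -/

import Mathlib

open scoped Classical
open scoped commutatorElement

/-- A slim partial linear space: a nonempty point set, a nonempty collection of
lines each of which is a 3-element set of points, such that any two distinct
points lie in at most one common line. -/
structure SlimPLS (P : Type*) where
  lines : Set (Finset P)
  nonempty_pts : Nonempty P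
  nonempty_lines : lines.Nonempty
  three_points : ∀ l ∈ lines, l.card = 3
  unique_line : ∀ l₁ ∈ lines, ∀ l₂ ∈ lines, ∀ x y : P,
    x ≠ y → x ∈ l₁ → y ∈ l₁ → x ∈ l₂ → y ∈ l₂ → l₁ = l₂

namespace SlimPLS

variable {P : Type*}

/-- Two points are collinear if they are distinct and lie on a common line. -/
def Collinear (S : SlimPLS P) (x y : P) : Prop :=
  x ≠ y ∧ ∃ l ∈ S.lines, x ∈ l ∧ y ∈ l

/-- The collinearity graph of a slim partial linear space. -/
def graph (S : SlimPLS P) : SimpleGraph P where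
  Adj x y := S.Collinear x y
  symm := ⟨fun x y h => ⟨Ne.symm h.1, h.2.elim fun l hl => ⟨l, hl.1, hl.2.2, hl.2.1⟩⟩⟩
  loopless := ⟨fun x h => h.1 rfl⟩

/-- `S` is a generalized quadrangle of order `(2, t)`: it is connected, no point
is collinear with all other points, every point is on exactly `t+1` lines, and
for every point `x` and line `l` with `x ∉ l` there is exactly one point of `l`
collinear with `x`. -/
def IsGQ (S : SlimPLS P) (t : ℕ) : Prop :=
  S.graph.Connected ∧
  (∀ x : P, ∃ y : P, y ≠ x ∧ ¬ S.Collinear x y) ∧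
  (∀ x : P, {l | l ∈ S.lines ∧ x ∈ l}.ncard = t + 1) ∧
  (∀ x : P, ∀ l ∈ S.lines, x ∉ l → ∃! y : P, y ∈ l ∧ S.Collinear x y)

/-- A set of points is an arc if its points are pairwise non-collinear. -/
def IsArc (S : SlimPLS P) (T : Set P) : Prop :=
  ∀ x ∈ T, ∀ y ∈ T, x ≠ y → ¬ S.Collinear x y

/-- `{a,b,c}` is a complete 3-arc: three pairwise distinct, pairwise
non-collinear points not contained in a 4-arc. -/
def Complete3Arc (S : SlimPLS P) (a b c : P) : Prop :=
  a ≠ b ∧ a ≠ c ∧ b ≠ c ∧ S.IsArc {a, b, c} ∧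
  ∀ d : P, d ∉ ({a, b, c} : Set P) → ¬ S.IsArc (insert d {a, b, c})

/-- `{a,b,c}` is a complete 3-arc of the subset `Q`: three pairwise distinct,
pairwise non-collinear points of `Q` not contained in a 4-arc inside `Q`. -/
def Complete3ArcIn (S : SlimPLS P) (Q : Set P) (a b c : P) : Prop :=
  a ∈ Q ∧ b ∈ Q ∧ c ∈ Q ∧ a ≠ b ∧ a ≠ c ∧ b ≠ c ∧ S.IsArc {a, b, c} ∧
  ∀ d ∈ Q, d ∉ ({a, b, c} : Set P) → ¬ S.IsArc (insert d {a, b, c})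

/-- `Q` is a sub-generalized-quadrangle of order `(2,t)` of `S`: together with
the lines of `S` contained in it, `Q` is a `(2,t)`-GQ; in particular any line
meeting `Q` in at least two points is contained in `Q`. -/
def IsSubGQ (S : SlimPLS P) (Q : Set P) (t : ℕ) : Prop :=
  Q.Nonempty ∧
  (∃ l ∈ S.lines, (l : Set P) ⊆ Q) ∧
  (∀ l ∈ S.lines, ∀ x ∈ l, ∀ y ∈ l, x ≠ y → x ∈ Q → y ∈ Q → (l : Set P) ⊆ Q) ∧
  (SimpleGraph.induce Q S.graph).Connected ∧
  (∀ x ∈ Q, ∃ y ∈ Q, y ≠ x ∧ ¬ S.Collinear x y) ∧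
  (∀ x ∈ Q, {l | l ∈ S.lines ∧ x ∈ l ∧ (l : Set P) ⊆ Q}.ncard = t + 1) ∧
  (∀ x ∈ Q, ∀ l ∈ S.lines, (l : Set P) ⊆ Q → x ∉ l → ∃! y : P, y ∈ l ∧ S.Collinear x y)

/-- `S` is a near hexagon: connected of diameter 3, no point collinear with all
other points, and for every point `x` and line `l` there is a unique point of
`l` nearest to `x`. -/
def IsNearHexagon (S : SlimPLS P) : Prop :=
  S.graph.Connected ∧
  (∀ x y : P, S.graph.dist x y ≤ 3) ∧
  (∃ x y : P, S.graph.dist x y = 3) ∧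
  (∀ x : P, ∃ y : P, y ≠ x ∧ ¬ S.Collinear x y) ∧
  (∀ x : P, ∀ l ∈ S.lines, ∃! y : P, y ∈ l ∧ ∀ z ∈ l, S.graph.dist x y ≤ S.graph.dist x z)

/-- `S` is dense: any two points at distance 2 have at least two common
neighbours. -/
def IsDense (S : SlimPLS P) : Prop :=
  ∀ x y : P, S.graph.dist x y = 2 →
    ∃ u v : P, u ≠ v ∧ S.Collinear x u ∧ S.Collinear u y ∧ S.Collinear x v ∧ S.Collinear v y

/-- `Q` is a quad: a convex subset of diameter 2 in which no point is collinear
with all other points of `Q`. -/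
def IsQuad (S : SlimPLS P) (Q : Set P) : Prop :=
  (∀ u ∈ Q, ∀ v ∈ Q, ∀ w : P,
      S.graph.dist u w + S.graph.dist w v = S.graph.dist u v → w ∈ Q) ∧
  (∀ u ∈ Q, ∀ v ∈ Q, S.graph.dist u v ≤ 2) ∧
  (∃ u ∈ Q, ∃ v ∈ Q, S.graph.dist u v = 2) ∧
  (∀ u ∈ Q, ∃ v ∈ Q, v ≠ u ∧ ¬ S.Collinear u v)

/-- A quad `Q` is of type `(2, t₂)` if every point of `Q` lies on exactly
`t₂ + 1` lines contained in `Q`. -/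
def QuadType (S : SlimPLS P) (Q : Set P) (t₂ : ℕ) : Prop :=
  ∀ x ∈ Q, {l | l ∈ S.lines ∧ x ∈ l ∧ (l : Set P) ⊆ Q}.ncard = t₂ + 1

/-- The point-quad pair `(x, Q)` is classical: there is a unique point `y ∈ Q`
nearest to `x`, with `d(x,z) = d(x,y) + d(y,z)` for all `z ∈ Q`. -/
def IsClassicalPair (S : SlimPLS P) (x : P) (Q : Set P) : Prop :=
  ∃! y : P, y ∈ Q ∧ ∀ z ∈ Q, S.graph.dist x z = S.graph.dist x y + S.graph.dist y z

/-- A quad is classical (big) if every point-quad pair with it is classical. -/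
def IsClassicalQuad (S : SlimPLS P) (Q : Set P) : Prop :=
  ∀ x : P, S.IsClassicalPair x Q

/-- A subspace: any line containing two of its points is contained in it. -/
def IsSubspace (S : SlimPLS P) (X : Set P) : Prop :=
  ∀ l ∈ S.lines, ∀ x ∈ l, ∀ y ∈ l, x ≠ y → x ∈ X → y ∈ X → (l : Set P) ⊆ X

/-- The subspace generated by a set of points. -/
def subspaceGen (S : SlimPLS P) (A : Set P) : Set P :=
  ⋂₀ {X | S.IsSubspace X ∧ A ⊆ X}

/-- `NPdim S` is the rank over `F₂` of the distance-3 adjacency matrix. -/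
noncomputable def NPdim [Fintype P] (S : SlimPLS P) : ℕ :=
  Matrix.rank (Matrix.of fun x y : P => if S.graph.dist x y = 3 then (1 : ZMod 2) else 0)

/-- `dimV S` is the dimension of the universal representation module of `S`:
the free `F₂`-vector space on the points modulo the span of the elements
`v_x + v_y + v_z` for the lines `{x,y,z}`. -/
noncomputable def dimV (S : SlimPLS P) : ℕ :=
  Module.finrank (ZMod 2)
    ((P →₀ ZMod 2) ⧸ Submodule.span (ZMod 2)
      {f : P →₀ ZMod 2 | ∃ l ∈ S.lines, f = ∑ x ∈ l, Finsupp.single x 1})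

end SlimPLS

/-- A representation of a slim partial linear space `S`: an assignment of an
order-2 element `r x` of `R` to each point `x`, such that the images generate
`R` and for every line `{x,y,z}` the set `{1, r x, r y, r z}` is a Klein four
subgroup (`r x * r y = r z` for the three pairwise distinct points of a line). -/
structure SlimPLS.Rep {P : Type*} (S : SlimPLS P) (R : Type*) [Group R] where
  r : P → R
  order_two : ∀ x : P, orderOf (r x) = 2
  gen : Subgroup.closure (Set.range r) = ⊤
  line_rel : ∀ l ∈ S.lines, ∀ x ∈ l, ∀ y ∈ l, ∀ z ∈ l,
    x ≠ y → x ≠ z → y ≠ z → r x * r y = r z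

/-- A finite 2-group is extraspecial if its Frattini subgroup, commutator
subgroup and center coincide and have order 2. -/
def IsExtraspecial (G : Type*) [Group G] : Prop :=
  Finite G ∧ IsPGroup 2 G ∧ frattini G = commutator G ∧
    commutator G = Subgroup.center G ∧ Nat.card (Subgroup.center G) = 2

namespace NHP
open SimpleGraph

variable {P : Type*} {S : SlimPLS P}

lemma dist_le3 (hNH : S.IsNearHexagon) (a b : P) : S.graph.dist a b ≤ 3 := hNH.2.1 a b

lemma dc (a b : P) : S.graph.dist a b = S.graph.dist b a := SimpleGraph.dist_comm

lemma tri (hNH : S.IsNearHexagon) (a b c : P) :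
    S.graph.dist a c ≤ S.graph.dist a b + S.graph.dist b c := hNH.1.dist_triangle

lemma adj_of_mem_line {l : Finset P} (hl : l ∈ S.lines) {a b : P} (ha : a ∈ l) (hb : b ∈ l)
    (hab : a ≠ b) : S.graph.Adj a b := ⟨hab, l, hl, ha, hb⟩

lemma dist_one {a b : P} (h : S.graph.Adj a b) : S.graph.dist a b = 1 :=
  SimpleGraph.dist_eq_one_iff_adj.mpr h

lemma adj_of_dist_one {a b : P} (h : S.graph.dist a b = 1) : S.graph.Adj a b :=
  SimpleGraph.dist_eq_one_iff_adj.mp h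

lemma dist_zero (hNH : S.IsNearHexagon) {a b : P} (h : S.graph.dist a b = 0) : a = b :=
  (hNH.1.dist_eq_zero_iff).mp h

noncomputable def lineOf (S : SlimPLS P) (a b : P) : Finset P :=
  if h : S.Collinear a b then h.2.choose else ∅

lemma lineOf_spec {a b : P} (h : S.graph.Adj a b) :
    lineOf S a b ∈ S.lines ∧ a ∈ lineOf S a b ∧ b ∈ lineOf S a b := by
  have hc : S.Collinear a b := h
  rw [lineOf, dif_pos hc]
  obtain ⟨hl, ha, hb⟩ := hc.2.choose_spec
  exact ⟨hl, ha, hb⟩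

lemma line_eq_lineOf {l : Finset P} (hl : l ∈ S.lines) {a b : P} (ha : a ∈ l) (hb : b ∈ l)
    (hab : a ≠ b) : l = lineOf S a b := by
  have h : S.graph.Adj a b := adj_of_mem_line hl ha hb hab
  obtain ⟨hl', ha', hb'⟩ := lineOf_spec h
  exact S.unique_line l hl _ hl' a b hab ha hb ha' hb'

noncomputable def thd (S : SlimPLS P) (a b : P) : P :=
  if h : ∃ c, c ∈ ((lineOf S a b).erase a).erase b then h.choose else a

lemma thd_prop {a b : P} (h : S.graph.Adj a b) :
    thd S a b ∈ lineOf S a b ∧ thd S a b ≠ a ∧ thd S a b ≠ b ∧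
      ∀ w ∈ lineOf S a b, w = a ∨ w = b ∨ w = thd S a b := by
  obtain ⟨hl, ha, hb⟩ := lineOf_spec h
  have hab : a ≠ b := h.ne
  have hbmem : b ∈ (lineOf S a b).erase a := Finset.mem_erase.mpr ⟨hab.symm, hb⟩
  have hcard : (((lineOf S a b).erase a).erase b).card = 1 := by
    rw [Finset.card_erase_of_mem hbmem, Finset.card_erase_of_mem ha, S.three_points _ hl]
  obtain ⟨x, hx⟩ := Finset.card_eq_one.mp hcard
  have hex : ∃ c, c ∈ ((lineOf S a b).erase a).erase b := ⟨x, by simp [hx]⟩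
  have hthd : thd S a b ∈ ((lineOf S a b).erase a).erase b := by
    rw [thd, dif_pos hex]; exact hex.choose_spec
  obtain ⟨h1, h2, h3⟩ : thd S a b ∈ lineOf S a b ∧ thd S a b ≠ a ∧ thd S a b ≠ b := by
    have := Finset.mem_erase.mp hthd
    have := Finset.mem_erase.mp this.2
    exact ⟨this.2, this.1, (Finset.mem_erase.mp hthd).1⟩
  refine ⟨h1, h2, h3, fun w hw => ?_⟩
  by_cases hwa : w = a
  · exact Or.inl hwa
  by_cases hwb : w = b
  · exact Or.inr (Or.inl hwb)
  right; right
  have hwmem : w ∈ ((lineOf S a b).erase a).erase b :=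
    Finset.mem_erase.mpr ⟨hwb, Finset.mem_erase.mpr ⟨hwa, hw⟩⟩
  rw [hx] at hwmem hthd
  rw [Finset.mem_singleton.mp hwmem, Finset.mem_singleton.mp hthd]

lemma thd_mem {a b : P} (h : S.graph.Adj a b) : thd S a b ∈ lineOf S a b := (thd_prop h).1
lemma thd_ne_left {a b : P} (h : S.graph.Adj a b) : thd S a b ≠ a := (thd_prop h).2.1
lemma thd_ne_right {a b : P} (h : S.graph.Adj a b) : thd S a b ≠ b := (thd_prop h).2.2.1

lemma thd_unique {a b c : P} (h : S.graph.Adj a b) (hc : c ∈ lineOf S a b)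
    (h1 : c ≠ a) (h2 : c ≠ b) : c = thd S a b := by
  rcases (thd_prop h).2.2.2 c hc with h' | h' | h'
  · exact absurd h' h1
  · exact absurd h' h2
  · exact h'

lemma lineOf_comm {a b : P} (h : S.graph.Adj a b) : lineOf S a b = lineOf S b a :=
  line_eq_lineOf (lineOf_spec h).1 (lineOf_spec h).2.2 (lineOf_spec h).2.1 h.ne.symm

lemma thd_comm {a b : P} (h : S.graph.Adj a b) : thd S a b = thd S b a := by
  have h1 : thd S b a ∈ lineOf S a b := by rw [lineOf_comm h]; exact thd_mem h.symm
  exact (thd_unique h h1 (thd_ne_right h.symm) (thd_ne_left h.symm)).symm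

lemma adj_thd_left {a b : P} (h : S.graph.Adj a b) : S.graph.Adj a (thd S a b) :=
  adj_of_mem_line (lineOf_spec h).1 (lineOf_spec h).2.1 (thd_mem h) (Ne.symm (thd_ne_left h))

lemma adj_thd_right {a b : P} (h : S.graph.Adj a b) : S.graph.Adj b (thd S a b) :=
  adj_of_mem_line (lineOf_spec h).1 (lineOf_spec h).2.2 (thd_mem h) (Ne.symm (thd_ne_right h))

lemma thd_thd {a b : P} (h : S.graph.Adj a b) : thd S a (thd S a b) = b := by
  have h2 : S.graph.Adj a (thd S a b) := adj_thd_left h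
  have hline : lineOf S a b = lineOf S a (thd S a b) :=
    line_eq_lineOf (lineOf_spec h).1 (lineOf_spec h).2.1 (thd_mem h) (Ne.symm (thd_ne_left h))
  have hbmem : b ∈ lineOf S a (thd S a b) := by rw [← hline]; exact (lineOf_spec h).2.2
  exact (thd_unique h2 hbmem h.ne.symm (Ne.symm (thd_ne_right h))).symm

lemma profile (hNH : S.IsNearHexagon) {a b : P} (h : S.graph.Adj a b) (z : P) :
    ∃ y₀ ∈ lineOf S a b, ∀ w ∈ lineOf S a b, w ≠ y₀ →
      S.graph.dist z w = S.graph.dist z y₀ + 1 := by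
  obtain ⟨y₀, ⟨hy₀m, hy₀min⟩, huniq⟩ := hNH.2.2.2.2 z (lineOf S a b) (lineOf_spec h).1
  refine ⟨y₀, hy₀m, fun w hw hne => ?_⟩
  have hadj : S.graph.Adj y₀ w := adj_of_mem_line (lineOf_spec h).1 hy₀m hw hne.symm
  have h1 : S.graph.dist z w ≤ S.graph.dist z y₀ + 1 := by
    have := tri hNH z y₀ w
    rwa [dist_one hadj] at this
  have h2 : ¬ (S.graph.dist z w ≤ S.graph.dist z y₀) := by
    intro hle
    exact hne (huniq w ⟨hw, fun u hu => hle.trans (hy₀min u hu)⟩)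
  omega

lemma P1 (hNH : S.IsNearHexagon) {a b z : P} (h : S.graph.Adj a b) {n : ℕ}
    (h1 : S.graph.dist z a = n + 1) (h2 : S.graph.dist z b = n + 1) :
    S.graph.dist z (thd S a b) = n := by
  obtain ⟨y₀, hy₀m, hstep⟩ := profile hNH h z
  obtain ⟨hm, hta, htb, hcov⟩ := thd_prop h
  rcases hcov y₀ hy₀m with rfl | rfl | rfl
  · have := hstep b (lineOf_spec h).2.2 h.ne.symm
    omega
  · have := hstep a (lineOf_spec h).2.1 h.ne
    omega
  · have := hstep a (lineOf_spec h).2.1 (Ne.symm hta)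
    omega

lemma P2 (hNH : S.IsNearHexagon) {a b z : P} (h : S.graph.Adj a b) {n : ℕ}
    (h1 : S.graph.dist z a = n) (h2 : S.graph.dist z b = n + 1) :
    S.graph.dist z (thd S a b) = n + 1 := by
  obtain ⟨y₀, hy₀m, hstep⟩ := profile hNH h z
  obtain ⟨hm, hta, htb, hcov⟩ := thd_prop h
  rcases hcov y₀ hy₀m with rfl | rfl | rfl
  · have := hstep _ hm hta
    omega
  · have := hstep a (lineOf_spec h).2.1 h.ne
    omega
  · have ha := hstep a (lineOf_spec h).2.1 (Ne.symm hta)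
    have hb := hstep b (lineOf_spec h).2.2 (Ne.symm htb)
    omega

lemma T1 (hNH : S.IsNearHexagon) {a b z : P} (h : S.graph.Adj a b)
    (h1 : S.graph.Adj z a) (h2 : S.graph.Adj z b) : z = thd S a b := by
  obtain ⟨y₀, hy₀m, hstep⟩ := profile hNH h z
  obtain ⟨hm, hta, htb, hcov⟩ := thd_prop h
  have d1 : S.graph.dist z a = 1 := dist_one h1
  have d2 : S.graph.dist z b = 1 := dist_one h2
  rcases hcov y₀ hy₀m with rfl | rfl | rfl
  · have := hstep b (lineOf_spec h).2.2 h.ne.symm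
    omega
  · have := hstep a (lineOf_spec h).2.1 h.ne
    omega
  · have := hstep a (lineOf_spec h).2.1 (Ne.symm hta)
    have h0 : S.graph.dist z (thd S a b) = 0 := by omega
    exact dist_zero hNH h0

lemma exists_adj_dist (hNH : S.IsNearHexagon) {x y : P} {n : ℕ}
    (h : S.graph.dist x y = n + 1) :
    ∃ a, S.graph.Adj a y ∧ S.graph.dist x a = n := by
  have hxy : y ≠ x := by
    intro he; subst he
    rw [SimpleGraph.dist_self] at h; omega
  obtain ⟨p, hp⟩ := hNH.1.exists_walk_length_eq_dist y x
  obtain ⟨a, hadj, q, rfl⟩ := SimpleGraph.Walk.exists_eq_cons_of_ne hxy p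
  have hq : q.length = n := by
    have : S.graph.dist y x = q.length + 1 := by
      rw [← hp]; simp [SimpleGraph.Walk.length_cons]
    rw [dc] at this; omega
  have hle : S.graph.dist x a ≤ n := by
    have := SimpleGraph.dist_le q.reverse
    rwa [SimpleGraph.Walk.length_reverse, hq] at this
  have hge : n ≤ S.graph.dist x a := by
    have h1 := tri hNH x a y
    rw [dist_one (hadj.symm : S.graph.Adj a y)] at h1
    omega
  exact ⟨a, hadj.symm, le_antisymm hle hge⟩

end NHP
namespace NHP
open SimpleGraph

variable {P : Type*} {S : SlimPLS P}

lemma dist_two_of (hNH : S.IsNearHexagon) {u v w : P} (h1 : S.graph.Adj u w)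
    (h2 : S.graph.Adj w v) (hne : u ≠ v) (hnadj : ¬ S.graph.Adj u v) :
    S.graph.dist u v = 2 := by
  have hle : S.graph.dist u v ≤ 2 := by
    have := tri hNH u w v
    rw [dist_one h1, dist_one h2] at this; omega
  have h0 : S.graph.dist u v ≠ 0 := fun hh => hne (dist_zero hNH hh)
  have hadj1 : S.graph.dist u v ≠ 1 := fun hh => hnadj (adj_of_dist_one hh)
  omega

/-- The key configuration lemma: for `x, y` at distance 2 with two distinct common
neighbours `u, v`, setting `p = x*u`, `q = u*y`, `s = x*v`, `t = v*y`, we have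
`p ∼ t`, `q ∼ s` and `p*t = q*s`. -/
lemma CFG (hNH : S.IsNearHexagon) {x y u v : P} (hxy : S.graph.dist x y = 2)
    (hxu : S.graph.Adj x u) (huy : S.graph.Adj u y)
    (hxv : S.graph.Adj x v) (hvy : S.graph.Adj v y) (huv : u ≠ v) :
    S.graph.Adj (thd S x u) (thd S v y) ∧ S.graph.Adj (thd S u y) (thd S x v) ∧
      thd S (thd S x u) (thd S v y) = thd S (thd S u y) (thd S x v) := by
  have hxy' : x ≠ y := fun hh => by rw [hh, SimpleGraph.dist_self] at hxy; omega
  have hd1 : ∀ {a b : P}, S.graph.Adj a b → S.graph.dist a b = 1 := fun h => dist_one h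
  -- u, v are at distance 2
  have huv2 : S.graph.dist u v = 2 := by
    refine dist_two_of hNH hxu.symm hxv huv fun hA => ?_
    have hx' : x = thd S u v := T1 hNH hA hxu hxv
    have hy' : y = thd S u v := T1 hNH hA huy.symm hvy.symm
    exact hxy' (hx'.trans hy'.symm)
  set p := thd S x u with hp
  set q := thd S u y with hq
  set s := thd S x v with hs
  set t := thd S v y with ht
  -- distances of the four outer points
  have dxq : S.graph.dist x q = 2 := P2 hNH huy (hd1 hxu) hxy
  have dyp : S.graph.dist y p = 2 := by
    have := P2 hNH hxu.symm (hd1 huy.symm) (by rw [dc]; exact hxy)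
    rwa [← thd_comm hxu] at this
  have dxt : S.graph.dist x t = 2 := P2 hNH hvy (hd1 hxv) hxy
  have dys : S.graph.dist y s = 2 := by
    have := P2 hNH hxv.symm (hd1 hvy.symm) (by rw [dc]; exact hxy)
    rwa [← thd_comm hxv] at this
  have dvp : S.graph.dist v p = 2 := P2 hNH hxu (hd1 hxv.symm) (by rw [dc]; exact huv2)
  have dus : S.graph.dist u s = 2 := P2 hNH hxv (hd1 hxu.symm) huv2
  have dut : S.graph.dist u t = 2 := by
    have := P2 hNH hvy.symm (hd1 huy) huv2
    rwa [← thd_comm hvy] at this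
  have dvq : S.graph.dist v q = 2 := by
    have := P2 hNH huy.symm (hd1 hvy) (by rw [dc]; exact huv2)
    rwa [← thd_comm huy] at this
  -- adjacency of p with u etc.
  have hpu : S.graph.Adj p u := (adj_thd_right hxu).symm
  have hqy : S.graph.Adj q y := (adj_thd_right huy).symm
  have hsx : S.graph.Adj s x := (adj_thd_left hxv).symm
  have hsv : S.graph.Adj s v := (adj_thd_right hxv).symm
  -- second-level distances
  have dpq : S.graph.dist p q = 2 := P2 hNH huy (hd1 hpu) (by rw [dc]; exact dyp)
  have dqt : S.graph.dist q t = 2 := by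
    have := P2 hNH hvy.symm (hd1 hqy) (by rw [dc]; exact dvq)
    rwa [← thd_comm hvy] at this
  have dsp : S.graph.dist s p = 2 := P2 hNH hxu (hd1 hsx) (by rw [dc]; exact dus)
  have dst : S.graph.dist s t = 2 := P2 hNH hvy (hd1 hsv) (by rw [dc]; exact dys)
  -- p ∼ t and q ∼ s
  have hpt : S.graph.Adj p t := by
    have := P1 hNH hvy (by rw [dc]; exact dvp) (by rw [dc]; exact dyp)
    exact adj_of_dist_one this
  have hqs : S.graph.Adj q s := by
    have := P1 hNH hxv (by rw [dc]; exact dxq) (by rw [dc]; exact dvq)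
    exact adj_of_dist_one this
  -- the common point m
  have hqm : S.graph.dist q (thd S p t) = 1 := P1 hNH hpt (by rw [dc]; exact dpq) dqt
  have hsm : S.graph.dist s (thd S p t) = 1 := P1 hNH hpt dsp dst
  have hmeq : thd S p t = thd S q s :=
    T1 hNH hqs (adj_of_dist_one hqm).symm (adj_of_dist_one hsm).symm
  exact ⟨hpt, hqs, hmeq⟩

end NHP
namespace NHP
open SimpleGraph

variable {P : Type*} {S : SlimPLS P} {R : Type*} [Group R]

lemma r_sq (ρ : S.Rep R) (a : P) : ρ.r a * ρ.r a = 1 := by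
  have h := pow_orderOf_eq_one (ρ.r a)
  rw [ρ.order_two, pow_two] at h
  exact h

lemma r_inv (ρ : S.Rep R) (a : P) : (ρ.r a)⁻¹ = ρ.r a :=
  inv_eq_of_mul_eq_one_right (r_sq ρ a)

lemma rep_mul (ρ : S.Rep R) {a b : P} (h : S.graph.Adj a b) :
    ρ.r a * ρ.r b = ρ.r (thd S a b) := by
  obtain ⟨hl, ha, hb⟩ := lineOf_spec h
  obtain ⟨hm, hta, htb, _⟩ := thd_prop h
  exact ρ.line_rel _ hl a ha b hb _ hm h.ne (Ne.symm hta) (Ne.symm htb)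

lemma comm_adj (ρ : S.Rep R) {a b : P} (h : S.graph.Adj a b) :
    Commute (ρ.r a) (ρ.r b) := by
  have h1 := rep_mul ρ h
  have h2 := rep_mul ρ h.symm
  rw [← thd_comm h] at h2
  exact (h1.trans h2.symm :)

lemma comm_expand (g b c : R) : ⁅g, b * c⁆ = ⁅g, b⁆ * (b * ⁅g, c⁆ * b⁻¹) := by
  simp only [commutatorElement_def]
  group

lemma conj_comm_inv (ρ : S.Rep R) (a b : P) :
    ρ.r b * ⁅ρ.r a, ρ.r b⁆ * ρ.r b = ⁅ρ.r a, ρ.r b⁆⁻¹ := by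
  have hb := r_sq ρ b
  simp only [commutatorElement_def, r_inv, mul_inv_rev, mul_assoc]
  simp [r_inv, hb]

lemma comm_two (hNH : S.IsNearHexagon) (hD : S.IsDense) (ρ : S.Rep R) {x y : P}
    (h : S.graph.dist x y = 2) : Commute (ρ.r x) (ρ.r y) := by
  obtain ⟨u, v, huv, c1, c2, c3, c4⟩ := hD x y h
  have c1 : S.graph.Adj x u := c1
  have c2 : S.graph.Adj u y := c2
  have c3 : S.graph.Adj x v := c3
  have c4 : S.graph.Adj v y := c4
  obtain ⟨hpt, hqs, hmeq⟩ := CFG hNH h c1 c2 c3 c4 huv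
  set p := thd S x u
  set q := thd S u y
  set s := thd S x v
  set t := thd S v y
  have e1 : ρ.r x * ρ.r u = ρ.r p := rep_mul ρ c1
  have e2 : ρ.r u * ρ.r y = ρ.r q := rep_mul ρ c2
  have e3 : ρ.r x * ρ.r v = ρ.r s := rep_mul ρ c3
  have e4 : ρ.r v * ρ.r y = ρ.r t := rep_mul ρ c4
  have exy1 : ρ.r x * ρ.r y = ρ.r p * ρ.r q := by
    rw [← e1, ← e2, mul_assoc, ← mul_assoc (ρ.r u), r_sq, one_mul]
  have exy2 : ρ.r x * ρ.r y = ρ.r s * ρ.r t := by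
    rw [← e3, ← e4, mul_assoc, ← mul_assoc (ρ.r v), r_sq, one_mul]
  have eqs : ρ.r q * ρ.r s = ρ.r (thd S q s) := rep_mul ρ hqs
  have ept : ρ.r p * ρ.r (thd S p t) = ρ.r t := by
    have := rep_mul ρ (adj_thd_left hpt)
    rwa [thd_thd hpt] at this
  have key : (ρ.r x * ρ.r y) * (ρ.r x * ρ.r y) = 1 := by
    calc (ρ.r x * ρ.r y) * (ρ.r x * ρ.r y) = (ρ.r p * ρ.r q) * (ρ.r s * ρ.r t) := by
          rw [← exy1, ← exy2]
      _ = ρ.r p * (ρ.r q * ρ.r s) * ρ.r t := by group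
      _ = ρ.r p * ρ.r (thd S p t) * ρ.r t := by rw [eqs, ← hmeq]
      _ = ρ.r t * ρ.r t := by rw [ept]
      _ = 1 := r_sq ρ t
  have hxy : ρ.r x * ρ.r y = (ρ.r x * ρ.r y)⁻¹ := (inv_eq_of_mul_eq_one_right key).symm
  show ρ.r x * ρ.r y = ρ.r y * ρ.r x
  rw [hxy, mul_inv_rev, r_inv, r_inv]

lemma comm_le2 (hNH : S.IsNearHexagon) (hD : S.IsDense) (ρ : S.Rep R) {x y : P}
    (h : S.graph.dist x y ≤ 2) : Commute (ρ.r x) (ρ.r y) := by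
  rcases Nat.lt_or_ge (S.graph.dist x y) 1 with h' | h'
  · have : x = y := dist_zero hNH (by omega)
    rw [this]
  · rcases Nat.lt_or_ge (S.graph.dist x y) 2 with h'' | h''
    · exact comm_adj ρ (adj_of_dist_one (by omega))
    · exact comm_two hNH hD ρ (by omega)

end NHP
namespace NHP
open SimpleGraph

variable {P : Type*} {S : SlimPLS P}

lemma L3 (hNH : S.IsNearHexagon) (hD : S.IsDense) {x y a : P}
    (hxy : S.graph.dist x y = 3) (hya : S.graph.dist y a = 2)
    (hxa : S.graph.dist x a = 2) :
    ∃ w, S.graph.Adj a w ∧ S.graph.Adj w y ∧ S.graph.dist x w = 3 := by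
  obtain ⟨u, v, huv, c1, c2, c3, c4⟩ := hD a y (by rw [dc]; exact hya)
  have c1 : S.graph.Adj a u := c1
  have c2 : S.graph.Adj u y := c2
  have c3 : S.graph.Adj a v := c3
  have c4 : S.graph.Adj v y := c4
  have hbu : 2 ≤ S.graph.dist x u := by
    have := tri hNH x u y
    rw [dist_one c2] at this; omega
  have hbv : 2 ≤ S.graph.dist x v := by
    have := tri hNH x v y
    rw [dist_one c4] at this; omega
  by_cases h3u : S.graph.dist x u = 3
  · exact ⟨u, c1, c2, h3u⟩
  by_cases h3v : S.graph.dist x v = 3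
  · exact ⟨v, c3, c4, h3v⟩
  have h2u : S.graph.dist x u = 2 := by have := dist_le3 hNH x u; omega
  have h2v : S.graph.dist x v = 2 := by have := dist_le3 hNH x v; omega
  obtain ⟨hpt, -, -⟩ := CFG hNH (by rw [dc]; exact hya) c1 c2 c3 c4 huv
  exfalso
  have dxp : S.graph.dist x (thd S a u) = 1 := P1 hNH c1 hxa h2u
  have dxt : S.graph.dist x (thd S v y) = 3 := P2 hNH c4 h2v hxy
  have := tri hNH x (thd S a u) (thd S v y)
  rw [dxp, dxt, dist_one hpt] at this
  omega

def Rel3 (S : SlimPLS P) (x a b : P) : Prop :=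
  S.graph.Adj a b ∧ S.graph.dist x a = 3 ∧ S.graph.dist x b = 3

lemma conn3_le2 (hNH : S.IsNearHexagon) (hD : S.IsDense) {x y y' : P}
    (hy : S.graph.dist x y = 3) (hy' : S.graph.dist x y' = 3)
    (hd : S.graph.dist y y' ≤ 2) :
    Relation.ReflTransGen (Rel3 S x) y y' := by
  by_cases h0 : S.graph.dist y y' = 0
  · rw [dist_zero hNH h0]
  by_cases h1 : S.graph.dist y y' = 1
  · exact Relation.ReflTransGen.single ⟨adj_of_dist_one h1, hy, hy'⟩
  have h2 : S.graph.dist y y' = 2 := by omega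
  obtain ⟨u, v, huv, c1, c2, c3, c4⟩ := hD y y' h2
  have c1 : S.graph.Adj y u := c1
  have c2 : S.graph.Adj u y' := c2
  have c3 : S.graph.Adj y v := c3
  have c4 : S.graph.Adj v y' := c4
  have hbu : 2 ≤ S.graph.dist x u := by
    have := tri hNH x u y'
    rw [dist_one c2] at this; omega
  have hbv : 2 ≤ S.graph.dist x v := by
    have := tri hNH x v y'
    rw [dist_one c4] at this; omega
  by_cases h3u : S.graph.dist x u = 3
  · exact (Relation.ReflTransGen.single ⟨c1, hy, h3u⟩).tail ⟨c2, h3u, hy'⟩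
  by_cases h3v : S.graph.dist x v = 3
  · exact (Relation.ReflTransGen.single ⟨c3, hy, h3v⟩).tail ⟨c4, h3v, hy'⟩
  have h2u : S.graph.dist x u = 2 := by have := dist_le3 hNH x u; omega
  have h2v : S.graph.dist x v = 2 := by have := dist_le3 hNH x v; omega
  obtain ⟨hpt, -, -⟩ := CFG hNH h2 c1 c2 c3 c4 huv
  have dxp : S.graph.dist x (thd S y u) = 3 := by
    have := P2 hNH c1.symm h2u hy
    rwa [← thd_comm c1] at this
  have dxt : S.graph.dist x (thd S v y') = 3 := P2 hNH c4 h2v hy'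
  have hyp : S.graph.Adj y (thd S y u) := adj_thd_left c1
  have hty' : S.graph.Adj (thd S v y') y' := (adj_thd_right c4).symm
  exact ((Relation.ReflTransGen.single ⟨hyp, hy, dxp⟩).tail
    ⟨hpt, dxp, dxt⟩).tail ⟨hty', dxt, hy'⟩

lemma conn3 (hNH : S.IsNearHexagon) (hD : S.IsDense) {x y y' : P}
    (hy : S.graph.dist x y = 3) (hy' : S.graph.dist x y' = 3) :
    Relation.ReflTransGen (Rel3 S x) y y' := by
  by_cases hle : S.graph.dist y y' ≤ 2
  · exact conn3_le2 hNH hD hy hy' hle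
  have h3 : S.graph.dist y y' = 3 := by have := dist_le3 hNH y y'; omega
  obtain ⟨a, hay', hya⟩ := exists_adj_dist hNH (show S.graph.dist y y' = 2 + 1 from h3)
  have hxa2 : 2 ≤ S.graph.dist x a := by
    have := tri hNH x a y'
    rw [dist_one hay'] at this; omega
  by_cases h3a : S.graph.dist x a = 3
  · exact (conn3_le2 hNH hD hy h3a (by omega)).tail ⟨hay', h3a, hy'⟩
  have h2a : S.graph.dist x a = 2 := by have := dist_le3 hNH x a; omega
  obtain ⟨w, haw, hwy, hxw⟩ := L3 hNH hD hy hya h2a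
  have hwy' : S.graph.dist w y' ≤ 2 := by
    have := tri hNH w a y'
    rw [dc w a, dist_one haw, dist_one hay'] at this; omega
  exact (Relation.ReflTransGen.single ⟨hwy.symm, hy, hxw⟩).trans
    (conn3_le2 hNH hD hxw hy' hwy')

lemma crossing {α : Type*} {r : α → α → Prop} {Q : α → Prop} {a b : α}
    (h : Relation.ReflTransGen r a b) (ha : Q a) :
    ¬ Q b → ∃ u v, r u v ∧ Q u ∧ ¬ Q v := by
  induction h with
  | refl => exact fun hb => absurd ha hb
  | @tail c d hac hcd ih =>
    intro hb
    by_cases hc : Q c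
    · exact ⟨c, d, hcd, hc, hb⟩
    · exact ih hc

lemma common_far (hNH : S.IsNearHexagon) (hD : S.IsDense) {a b za zb : P}
    (hab : S.graph.Adj a b) (h1 : S.graph.dist a za = 3) (h2 : S.graph.dist b zb = 3) :
    ∃ w, S.graph.dist a w = 3 ∧ S.graph.dist b w = 3 := by
  by_contra hcon
  push_neg at hcon
  have step1 : ∀ z, S.graph.dist a z = 3 →
      S.graph.dist b z = 2 ∧ S.graph.dist (thd S a b) z = 3 := by
    intro z hz
    have hb2 : S.graph.dist b z = 2 := by
      have hge : 2 ≤ S.graph.dist b z := by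
        have := tri hNH a b z
        rw [dist_one hab] at this; omega
      have := dist_le3 hNH b z
      have := hcon z hz
      omega
    constructor
    · exact hb2
    · have hzb : S.graph.dist z b = 2 := by rw [dc]; exact hb2
      have hza : S.graph.dist z a = 3 := by rw [dc]; exact hz
      have := P2 hNH hab.symm hzb hza
      rw [← thd_comm hab] at this
      rwa [dc]
  have step2 : ∀ z, S.graph.dist b z = 3 →
      S.graph.dist a z = 2 ∧ S.graph.dist (thd S a b) z = 3 := by
    intro z hz
    have ha2 : S.graph.dist a z = 2 := by
      have hge : 2 ≤ S.graph.dist a z := by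
        have := tri hNH b a z
        rw [dc b a, dist_one hab] at this; omega
      have hle := dist_le3 hNH a z
      have : S.graph.dist a z ≠ 3 := fun hh => hcon z hh hz
      omega
    constructor
    · exact ha2
    · have hza : S.graph.dist z a = 2 := by rw [dc]; exact ha2
      have hzb : S.graph.dist z b = 3 := by rw [dc]; exact hz
      have := P2 hNH hab hza hzb
      rwa [dc]
  have step3 : ∀ z, S.graph.dist (thd S a b) z = 3 →
      S.graph.dist a z = 3 ∨ S.graph.dist b z = 3 := by
    intro z hz
    obtain ⟨y₀, hy₀m, hstep⟩ := profile hNH hab z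
    obtain ⟨hm, hta, htb, hcov⟩ := thd_prop hab
    rcases hcov y₀ hy₀m with rfl | rfl | rfl
    · right
      have h1' := hstep _ hm hta
      have h2' := hstep b (lineOf_spec hab).2.2 hab.ne.symm
      rw [dc] at hz ⊢
      omega
    · left
      have h1' := hstep _ hm htb
      have h2' := hstep a (lineOf_spec hab).2.1 hab.ne
      rw [dc] at hz ⊢
      omega
    · exfalso
      have h1' := hstep a (lineOf_spec hab).2.1 (Ne.symm hta)
      have := dist_le3 hNH z a
      rw [dc] at hz
      omega
  have hza_e : S.graph.dist (thd S a b) za = 3 := (step1 za h1).2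
  have hzb_e : S.graph.dist (thd S a b) zb = 3 := (step2 zb h2).2
  have hchain := conn3 hNH hD hza_e hzb_e
  have hQa : S.graph.dist a za = 3 := h1
  have hnQb : ¬ S.graph.dist a zb = 3 := by
    have := (step2 zb h2).1; omega
  obtain ⟨z1, z2, ⟨hadj, he1, he2⟩, hq1, hq2⟩ :=
    crossing (Q := fun z => S.graph.dist a z = 3) hchain hQa hnQb
  have hbz2 : S.graph.dist b z2 = 3 := by
    rcases step3 z2 he2 with h' | h'
    · exact absurd h' hq2
    · exact h'
  have haz2 : S.graph.dist a z2 = 2 := (step2 z2 hbz2).1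
  have haf : S.graph.dist a (thd S z1 z2) = 3 := by
    have := P2 hNH hadj.symm haz2 hq1
    rwa [← thd_comm hadj] at this
  have hef : S.graph.dist (thd S a b) (thd S z1 z2) = 2 := P1 hNH hadj he1 he2
  have := (step1 _ haf).2
  omega

end NHP
namespace NHP
open SimpleGraph

variable {P : Type*} {S : SlimPLS P} {R : Type*} [Group R]

/-- If `w` lies on a line together with two points `u`, `s` having no point at
distance 3, while `w` has a point at distance 3, we get a contradiction. -/
lemma lemG (hNH : S.IsNearHexagon) {w u ζ : P} (hwu : S.graph.Adj w u)
    (hζ : S.graph.dist w ζ = 3) (hu : ∀ g, S.graph.dist u g ≠ 3)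
    (hs : ∀ g, S.graph.dist (thd S w u) g ≠ 3) : False := by
  obtain ⟨aa, haζ, hwa⟩ := exists_adj_dist hNH (show S.graph.dist w ζ = 2 + 1 from hζ)
  have hζ₂ : S.graph.dist w (thd S aa ζ) = 3 := P2 hNH haζ hwa hζ
  have hws : S.graph.Adj w (thd S w u) := adj_thd_left hwu
  have hus : S.graph.Adj u (thd S w u) := adj_thd_right hwu
  have huζ : S.graph.dist u ζ = 2 := by
    have h1 := tri hNH w u ζ
    rw [dist_one hwu] at h1
    have := dist_le3 hNH u ζ
    have := hu ζ
    omega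
  have huζ₂ : S.graph.dist u (thd S aa ζ) = 2 := by
    have h1 := tri hNH w u (thd S aa ζ)
    rw [dist_one hwu] at h1
    have := dist_le3 hNH u (thd S aa ζ)
    have := hu (thd S aa ζ)
    omega
  have hsζ : S.graph.dist (thd S w u) ζ = 2 := by
    have h1 := tri hNH w (thd S w u) ζ
    rw [dist_one hws] at h1
    have := dist_le3 hNH (thd S w u) ζ
    have := hs ζ
    omega
  have hsζ₂ : S.graph.dist (thd S w u) (thd S aa ζ) = 2 := by
    have h1 := tri hNH w (thd S w u) (thd S aa ζ)
    rw [dist_one hws] at h1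
    have := dist_le3 hNH (thd S w u) (thd S aa ζ)
    have := hs (thd S aa ζ)
    omega
  have hζζ₂ : S.graph.Adj ζ (thd S aa ζ) := adj_thd_right haζ
  have h1 : S.graph.dist u (thd S ζ (thd S aa ζ)) = 1 := P1 hNH hζζ₂ huζ huζ₂
  have h2 : S.graph.dist (thd S w u) (thd S ζ (thd S aa ζ)) = 1 := P1 hNH hζζ₂ hsζ hsζ₂
  have hthd : thd S ζ (thd S aa ζ) = aa := by
    rw [show thd S aa ζ = thd S ζ aa from thd_comm haζ]
    exact thd_thd haζ.symm
  rw [hthd] at h1 h2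
  have hT : aa = thd S u (thd S w u) :=
    T1 hNH hus (adj_of_dist_one h1).symm (adj_of_dist_one h2).symm
  have hw' : thd S u (thd S w u) = w := by
    rw [show thd S w u = thd S u w from thd_comm hwu]
    exact thd_thd hwu.symm
  rw [hw'] at hT
  rw [hT, SimpleGraph.dist_self] at hwa
  omega

/-- Any two points having points at distance 3 are connected in the
"oppositeness graph". -/
lemma opp_conn (hNH : S.IsNearHexagon) (hD : S.IsDense) {x y p q : P}
    (hxy : S.graph.dist x y = 3) (hpq : S.graph.dist p q = 3) :
    Relation.ReflTransGen (fun a b => S.graph.dist a b = 3) x p := by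
  have step : ∀ a b za zb : P, S.graph.Adj a b → S.graph.dist a za = 3 →
      S.graph.dist b zb = 3 →
      Relation.ReflTransGen (fun a b => S.graph.dist a b = 3) a b := by
    intro a b za zb hab h1 h2
    obtain ⟨w, hw1, hw2⟩ := common_far hNH hD hab h1 h2
    have hw2' : S.graph.dist w b = 3 := by rw [dc]; exact hw2
    show Relation.ReflTransGen (fun a b => S.graph.dist a b = 3) a b
    exact Relation.ReflTransGen.tail (Relation.ReflTransGen.single hw1) hw2'
  have hk := dist_le3 hNH x p
  by_cases h0 : S.graph.dist x p = 0
  · rw [dist_zero hNH h0]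
  by_cases h3 : S.graph.dist x p = 3
  · exact Relation.ReflTransGen.single h3
  by_cases h1 : S.graph.dist x p = 1
  · exact step x p y q (adj_of_dist_one h1) hxy hpq
  have h2 : S.graph.dist x p = 2 := by omega
  obtain ⟨u, v, huv, c1, c2, c3, c4⟩ := hD x p h2
  have c1 : S.graph.Adj x u := c1
  have c2 : S.graph.Adj u p := c2
  have c3 : S.graph.Adj x v := c3
  have c4 : S.graph.Adj v p := c4
  by_cases hu3 : ∃ g, S.graph.dist u g = 3
  · obtain ⟨g, hg⟩ := hu3
    exact (step x u y g c1 hxy hg).trans (step u p g q c2 hg hpq)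
  by_cases hv3 : ∃ g, S.graph.dist v g = 3
  · obtain ⟨g, hg⟩ := hv3
    exact (step x v y g c3 hxy hg).trans (step v p g q c4 hg hpq)
  push_neg at hu3 hv3
  obtain ⟨hpt, -, -⟩ := CFG hNH h2 c1 c2 c3 c4 huv
  have hp' : ∃ g, S.graph.dist (thd S x u) g = 3 := by
    by_contra hcon
    push_neg at hcon
    exact lemG hNH c1 hxy hu3 hcon
  have ht' : ∃ g, S.graph.dist (thd S v p) g = 3 := by
    by_contra hcon
    push_neg at hcon
    refine lemG hNH (c4.symm : S.graph.Adj p v) hpq hv3 ?_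
    rwa [← thd_comm c4.symm] at hcon
  obtain ⟨g1, hg1⟩ := hp'
  obtain ⟨g2, hg2⟩ := ht'
  refine ((step x (thd S x u) y g1 (adj_thd_left c1) hxy hg1).trans
    (step (thd S x u) (thd S v p) g1 g2 hpt hg1 hg2)).trans
    (step (thd S v p) p g2 q (adj_thd_right c4).symm hg2 hpq)

lemma comm_move (hNH : S.IsNearHexagon) (hD : S.IsDense) (ρ : S.Rep R) {x a b : P}
    (hab : S.graph.Adj a b) (ha : S.graph.dist x a = 3) (hb : S.graph.dist x b = 3) :
    ⁅ρ.r x, ρ.r a⁆ = ⁅ρ.r x, ρ.r b⁆ := by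
  have hw : S.graph.dist x (thd S a b) = 2 := P1 hNH hab ha hb
  have cxw : Commute (ρ.r x) (ρ.r (thd S a b)) := comm_two hNH hD ρ hw
  have hrb : ρ.r b = ρ.r a * ρ.r (thd S a b) := by
    have h1 := rep_mul ρ hab
    calc ρ.r b = (ρ.r a * ρ.r a) * ρ.r b := by rw [r_sq, one_mul]
      _ = ρ.r a * (ρ.r a * ρ.r b) := mul_assoc _ _ _
      _ = ρ.r a * ρ.r (thd S a b) := by rw [h1]
  have hc : ⁅ρ.r x, ρ.r (thd S a b)⁆ = 1 := commutatorElement_eq_one_iff_commute.mpr cxw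
  rw [hrb, comm_expand, hc]
  group

lemma comm_const (hNH : S.IsNearHexagon) (hD : S.IsDense) (ρ : S.Rep R) {x g g' : P}
    (hg : S.graph.dist x g = 3) (hg' : S.graph.dist x g' = 3) :
    ⁅ρ.r x, ρ.r g⁆ = ⁅ρ.r x, ρ.r g'⁆ := by
  have hchain := conn3 hNH hD hg hg'
  induction hchain with
  | refl => rfl
  | tail hac hcb ih =>
    exact (ih hcb.2.1).trans (comm_move hNH hD ρ hcb.1 hcb.2.1 hcb.2.2)

lemma opp_trivial (hNH : S.IsNearHexagon) (hD : S.IsDense) (ρ : S.Rep R) {x y : P}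
    (hxy : S.graph.dist x y = 3) (hz : ⁅ρ.r x, ρ.r y⁆ = 1) {p : P}
    (hp : Relation.ReflTransGen (fun a b => S.graph.dist a b = 3) x p) :
    ∀ g, S.graph.dist p g = 3 → ⁅ρ.r p, ρ.r g⁆ = 1 := by
  induction hp with
  | refl => exact fun g hg => (comm_const hNH hD ρ hg hxy).trans hz
  | @tail c p' hxc hcp ih =>
    intro g hg
    have h1 : ⁅ρ.r p', ρ.r g⁆ = ⁅ρ.r p', ρ.r c⁆ :=
      comm_const hNH hD ρ hg (by rw [dc]; exact hcp)
    have h2 : ⁅ρ.r c, ρ.r p'⁆ = 1 := ih p' hcp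
    rw [h1, ← commutatorElement_inv, h2, inv_one]

lemma exists_noncomm (ρ : S.Rep R) (hna : ¬ ∀ a b : R, a * b = b * a) :
    ∃ p q : P, ¬ Commute (ρ.r p) (ρ.r q) := by
  by_contra h
  push_neg at h
  apply hna
  have h1 : ∀ (t : R), ∀ g ∈ Set.range ρ.r, g * t = t * g := by
    intro t
    have ht : t ∈ Subgroup.closure (Set.range ρ.r) := by rw [ρ.gen]; trivial
    have hsub : Subgroup.closure (Set.range ρ.r) ≤ Subgroup.centralizer (Set.range ρ.r) := by
      rw [Subgroup.closure_le]
      rintro g' ⟨p, rfl⟩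
      rw [SetLike.mem_coe, Subgroup.mem_centralizer_iff]
      rintro g ⟨q, rfl⟩
      exact h q p
    have := hsub ht
    rwa [Subgroup.mem_centralizer_iff] at this
  intro a b
  have hK : Subgroup.closure (Set.range ρ.r) ≤ Subgroup.centralizer {b} := by
    rw [Subgroup.closure_le]
    rintro g ⟨p, rfl⟩
    rw [SetLike.mem_coe, Subgroup.mem_centralizer_iff]
    intro g' hg'
    rw [Set.mem_singleton_iff] at hg'
    subst hg'
    exact (h1 g' _ ⟨p, rfl⟩).symm
  have ha : a ∈ Subgroup.centralizer {b} := hK (by rw [ρ.gen]; trivial)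
  rw [Subgroup.mem_centralizer_iff] at ha
  exact (ha b rfl).symm

lemma noncomm_dist3 (hNH : S.IsNearHexagon) (hD : S.IsDense) (ρ : S.Rep R) {p q : P}
    (h : ¬ Commute (ρ.r p) (ρ.r q)) : S.graph.dist p q = 3 := by
  have hle := dist_le3 hNH p q
  by_contra h3
  exact h (comm_le2 hNH hD ρ (by omega))

lemma comm_prod (ρ : S.Rep R) (x : P) (z : R) :
    ∀ (l : List P), (∀ y ∈ l, ⁅ρ.r x, ρ.r y⁆ = z) →
      ⁅ρ.r x, (l.map ρ.r).prod⁆ = if Even l.length then 1 else z := by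
  intro l
  induction l with
  | nil => intro _; simp
  | cons b t ih =>
    intro hl
    have hb : ⁅ρ.r x, ρ.r b⁆ = z := hl b (List.mem_cons_self (a := b) (l := t))
    have ht := ih (fun y hy => hl y (List.mem_cons_of_mem _ hy))
    rw [List.map_cons, List.prod_cons, comm_expand, ht]
    have hconj : ρ.r b * z * ρ.r b = z⁻¹ := by
      have := conj_comm_inv ρ x b
      rwa [hb] at this
    by_cases he : Even t.length
    · rw [if_pos he, if_neg (by simp [Nat.even_add_one, he])]
      rw [hb, r_inv, mul_one, r_sq, mul_one]
    · rw [if_neg he, if_pos (by simp [Nat.even_add_one, he])]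
      rw [hb, r_inv, hconj]
      group
end NHP

/-- Let `(R,ψ)` be a non-abelian representation of a slim dense
near hexagon, `x` a point and `Y` a finite subset of `Γ₃(x)`. For any
enumeration `y₁, …, y_k` of `Y`, the commutator `[r_x, r_{y₁} ⋯ r_{y_k}]`
equals `1` iff `|Y|` is even. -/
theorem commutator_with_product_over_distance_three {P : Type*} (S : SlimPLS P)
    (hNH : S.IsNearHexagon) (hD : S.IsDense)
    {R : Type*} [Group R] (ρ : S.Rep R)
    (hna : ¬ ∀ a b : R, a * b = b * a)
    (x : P) (Y : Finset P) (hY : ∀ y ∈ Y, S.graph.dist x y = 3)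
    (ys : List P) (hnd : ys.Nodup) (hys : ys.toFinset = Y) :
    ⁅ρ.r x, (ys.map ρ.r).prod⁆ = 1 ↔ Even Y.card := by
  classical
  subst hys
  have hlen : ys.toFinset.card = ys.length := List.toFinset_card_of_nodup hnd
  rw [hlen]
  cases ys with
  | nil => simp
  | cons y₀ t =>
    have hy₀ : S.graph.dist x y₀ = 3 := hY y₀ (by simp)
    have hall : ∀ y ∈ (y₀ :: t), ⁅ρ.r x, ρ.r y⁆ = ⁅ρ.r x, ρ.r y₀⁆ := by
      intro y hy
      exact NHP.comm_const hNH hD ρ (hY y (List.mem_toFinset.mpr hy)) hy₀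
    have hml := NHP.comm_prod ρ x (⁅ρ.r x, ρ.r y₀⁆) (y₀ :: t) hall
    have hz1 : ⁅ρ.r x, ρ.r y₀⁆ ≠ 1 := by
      intro hz
      obtain ⟨p, q, hnc⟩ := NHP.exists_noncomm ρ hna
      have hpq := NHP.noncomm_dist3 hNH hD ρ hnc
      have hreach := NHP.opp_conn hNH hD hy₀ hpq
      exact hnc (commutatorElement_eq_one_iff_commute.mp
        (NHP.opp_trivial hNH hD ρ hy₀ hz hreach q hpq))
    rw [hml]
    by_cases he : Even (y₀ :: t).length
    · rw [if_pos he]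
      exact ⟨fun _ => he, fun _ => rfl⟩
    · rw [if_neg he]
      exact iff_of_false hz1 he
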